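/- Let P₁, …, P_n be real symmetric p×p matrices with Pᵢ² = Pᵢ and rank(Pᵢ) = k for all i, and let Ā = (1/n)·Σᵢ Pᵢ be their arithmetic mean. Let V_k be a real p×k matrix with V_kᵀV_k = I_k whose columns are eigenvectors of Ā associated with its k largest eigenvalues (so that Ā V_k = V_k Λ for a diagonal Λ), and set G = V_k V_kᵀ. Then (1/n)·Σᵢ 2·sym((I_p − G)(Pᵢ − G)G) = 0. Consequently the projection of the arithmetic mean onto the Grassmann manifold is the RL-barycenter of P₁, …, P_n for the projection retraction and the tangent-space-projection lifting. -/

import Mathlib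

open Matrix

/-- Symmetric part of a square matrix: `sym(M) = (M + Mᵀ)/2`. -/
noncomputable def symPart {p : ℕ} (M : Matrix (Fin p) (Fin p) ℝ) :
    Matrix (Fin p) (Fin p) ℝ :=
  (1 / 2 : ℝ) • (M + Mᵀ)

/-- **The projected arithmetic mean is the `RL`-barycenter on Grassmann.**
If `P₁, …, Pₙ` are symmetric rank-`k` projectors with arithmetic mean `Ā`, and
`Vk` has orthonormal columns which are eigenvectors of `Ā` (so `Ā Vk = Vk Λ`
with `Λ` diagonal), then with `G = Vk Vkᵀ` the average of the tangent-space
projection liftings vanishes: `(1/n)·Σᵢ 2·sym((I − G)(Pᵢ − G)G) = 0`. -/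
theorem projected_mean_is_RL_barycenter_grassmann {p k n : ℕ} (hn : 0 < n)
    (P : Fin n → Matrix (Fin p) (Fin p) ℝ)
    (hPsym : ∀ i, (P i)ᵀ = P i)
    (hPproj : ∀ i, P i * P i = P i)
    (hPrank : ∀ i, (P i).rank = k)
    (Abar : Matrix (Fin p) (Fin p) ℝ)
    (hAbar : Abar = (1 / (n : ℝ)) • ∑ i, P i)
    (Vk : Matrix (Fin p) (Fin k) ℝ) (Λ : Matrix (Fin k) (Fin k) ℝ)
    (hVk : Vkᵀ * Vk = 1) (hΛ : Λ.IsDiag) (heig : Abar * Vk = Vk * Λ)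
    (G : Matrix (Fin p) (Fin p) ℝ) (hG : G = Vk * Vkᵀ) :
    (1 / (n : ℝ)) • ∑ i, (2 : ℝ) • symPart ((1 - G) * (P i - G) * G) = 0 := by
  -- G is idempotent
  have hGG : G * G = G := by
    rw [hG]
    calc Vk * Vkᵀ * (Vk * Vkᵀ) = Vk * (Vkᵀ * Vk) * Vkᵀ := by
          simp [Matrix.mul_assoc]
      _ = Vk * Vkᵀ := by rw [hVk, Matrix.mul_one]
  -- (1 - G) * G = 0
  have h1 : (1 - G) * G = 0 := by
    rw [sub_mul, one_mul, hGG, sub_self]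
  -- (1 - G) * Vk = 0
  have hV0 : (1 - G) * Vk = 0 := by
    rw [Matrix.sub_mul, Matrix.one_mul, hG, Matrix.mul_assoc, hVk, Matrix.mul_one, sub_self]
  -- (1 - G) * Abar * G = 0
  have h2 : (1 - G) * Abar * G = 0 := by
    have : Abar * G = Vk * Λ * Vkᵀ := by
      rw [hG, ← Matrix.mul_assoc, heig]
    calc (1 - G) * Abar * G = (1 - G) * (Abar * G) := by rw [Matrix.mul_assoc]
      _ = (1 - G) * (Vk * Λ * Vkᵀ) := by rw [this]
      _ = ((1 - G) * Vk) * (Λ * Vkᵀ) := by simp [Matrix.mul_assoc]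
      _ = 0 := by rw [hV0, Matrix.zero_mul]
  -- sum of the inner matrices vanishes
  have hsum : ∑ i, (1 - G) * (P i - G) * G = 0 := by
    have hS : ∑ i, P i = (n : ℝ) • Abar := by
      rw [hAbar, smul_smul]
      have hn' : (n : ℝ) ≠ 0 := Nat.cast_ne_zero.mpr hn.ne'
      rw [mul_one_div, div_self hn', one_smul]
    calc ∑ i, (1 - G) * (P i - G) * G
        = (1 - G) * ((∑ i, P i) - (n : ℝ) • G) * G := by
          rw [Finset.sum_congr rfl (fun i _ => rfl)]
          rw [← Finset.sum_mul, ← Finset.mul_sum]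
          congr 2
          rw [Finset.sum_sub_distrib, Finset.sum_const, Finset.card_univ,
            Fintype.card_fin, ← Nat.cast_smul_eq_nsmul ℝ]
      _ = (n : ℝ) • ((1 - G) * (Abar - G) * G) := by
          rw [hS, ← smul_sub, Matrix.mul_smul, Matrix.smul_mul]
      _ = 0 := by
          rw [Matrix.mul_sub, Matrix.sub_mul, h2, h1, Matrix.zero_mul, sub_self,
            smul_zero]
  -- conclude via linearity of symPart
  have : ∑ i, (2 : ℝ) • symPart ((1 - G) * (P i - G) * G)
      = (∑ i, (1 - G) * (P i - G) * G) + (∑ i, (1 - G) * (P i - G) * G)ᵀ := by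
    rw [Matrix.transpose_sum, ← Finset.sum_add_distrib]
    refine Finset.sum_congr rfl fun i _ => ?_
    simp [symPart, smul_smul]
  rw [this, hsum]
  simp
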